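/- arXiv:2111.14995 — 3 statements merged into one kernel-verified Lean document; each statement's English description precedes it below -/
import Mathlib

section
/- For all a, b, d > 0 and z ∈ [0,1], the function q_a(z) = -a²(a²(1-z²) + b²(1+z²)) / (d²(a²(1-z²) + b²z²)^{3/2}) satisfies min{-(a²+b²)/(a d²), -2a²/(b d²)} ≤ q_a(z) ≤ max{-(a²+b²)/(a d²), -2a²/(b d²)}. -/
open Real

private lemma split_prod (b : ℝ) {w : ℝ} (hw : 0 < w) :
    (w + b ^ 2) * w ^ (-(3/2) : ℝ) = w ^ (-(1/2) : ℝ) + b ^ 2 * w ^ (-(3/2) : ℝ) := by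
  have h1 : w * w ^ (-(3/2) : ℝ) = w ^ (-(1/2) : ℝ) := by
    nth_rewrite 1 [← Real.rpow_one w]
    rw [← Real.rpow_add hw]
    norm_num
  rw [add_mul, h1]

private lemma gmono (b : ℝ) {u v : ℝ} (hu : 0 < u) (huv : u ≤ v) :
    (v + b ^ 2) * v ^ (-(3/2) : ℝ) ≤ (u + b ^ 2) * u ^ (-(3/2) : ℝ) := by
  have hv : 0 < v := lt_of_lt_of_le hu huv
  rw [split_prod b hu, split_prod b hv]
  have h1 : v ^ (-(1/2) : ℝ) ≤ u ^ (-(1/2) : ℝ) :=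
    Real.rpow_le_rpow_of_nonpos hu huv (by norm_num)
  have h2 : v ^ (-(3/2) : ℝ) ≤ u ^ (-(3/2) : ℝ) :=
    Real.rpow_le_rpow_of_nonpos hu huv (by norm_num)
  nlinarith [sq_nonneg b]

private lemma expr_eq (a b d : ℝ) (ha : 0 < a) (hd : 0 < d) {w : ℝ} (hw : 0 < w) :
    -a ^ 2 * (w + b ^ 2) / (d ^ 2 * w ^ ((3:ℝ)/2)) =
      -(a ^ 2 / d ^ 2) * ((w + b ^ 2) * w ^ (-(3/2) : ℝ)) := by
  rw [Real.rpow_neg hw.le]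
  have hw32 : w ^ ((3:ℝ)/2) ≠ 0 := (Real.rpow_pos_of_pos hw _).ne'
  field_simp

private lemma fmono (a b d : ℝ) (ha : 0 < a) (hd : 0 < d) {u v : ℝ} (hu : 0 < u)
    (huv : u ≤ v) :
    -a ^ 2 * (u + b ^ 2) / (d ^ 2 * u ^ ((3:ℝ)/2)) ≤
      -a ^ 2 * (v + b ^ 2) / (d ^ 2 * v ^ ((3:ℝ)/2)) := by
  rw [expr_eq a b d ha hd hu, expr_eq a b d ha hd (lt_of_lt_of_le hu huv)]
  have key := gmono b hu huv
  have had : 0 < a ^ 2 / d ^ 2 := by positivity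
  nlinarith

private lemma fend1 (a b d : ℝ) (ha : 0 < a) (hd : 0 < d) :
    -a ^ 2 * (a ^ 2 + b ^ 2) / (d ^ 2 * (a ^ 2) ^ ((3:ℝ)/2)) =
      -(a ^ 2 + b ^ 2) / (a * d ^ 2) := by
  have h : (a ^ 2 : ℝ) ^ ((3:ℝ)/2) = a ^ 3 := by
    rw [← Real.rpow_natCast a 2, ← Real.rpow_mul ha.le]
    norm_num
  rw [h]
  have := ha.ne'
  field_simp

private lemma fend2 (a b d : ℝ) (hb : 0 < b) (hd : 0 < d) :
    -a ^ 2 * (b ^ 2 + b ^ 2) / (d ^ 2 * (b ^ 2) ^ ((3:ℝ)/2)) =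
      -(2 * a ^ 2) / (b * d ^ 2) := by
  have h : (b ^ 2 : ℝ) ^ ((3:ℝ)/2) = b ^ 3 := by
    rw [← Real.rpow_natCast b 2, ← Real.rpow_mul hb.le]
    norm_num
  rw [h]
  have := hb.ne'
  field_simp
  ring

theorem stmt_1 (a b d z : ℝ) (ha : 0 < a) (hb : 0 < b) (hd : 0 < d)
    (hz : z ∈ Set.Icc (0:ℝ) 1) :
    min (-(a ^ 2 + b ^ 2) / (a * d ^ 2)) (-(2 * a ^ 2) / (b * d ^ 2)) ≤
        -a ^ 2 * (a ^ 2 * (1 - z ^ 2) + b ^ 2 * (1 + z ^ 2)) /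
          (d ^ 2 * (a ^ 2 * (1 - z ^ 2) + b ^ 2 * z ^ 2) ^ ((3:ℝ)/2)) ∧
      -a ^ 2 * (a ^ 2 * (1 - z ^ 2) + b ^ 2 * (1 + z ^ 2)) /
          (d ^ 2 * (a ^ 2 * (1 - z ^ 2) + b ^ 2 * z ^ 2) ^ ((3:ℝ)/2)) ≤
        max (-(a ^ 2 + b ^ 2) / (a * d ^ 2)) (-(2 * a ^ 2) / (b * d ^ 2)) := by
  obtain ⟨hz0, hz1⟩ := hz
  set w : ℝ := a ^ 2 * (1 - z ^ 2) + b ^ 2 * z ^ 2 with hwdef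
  have hz2 : z ^ 2 ≤ 1 := by nlinarith
  have hz2' : 0 ≤ z ^ 2 := sq_nonneg z
  have hw : 0 < w := by
    rcases le_or_gt (z ^ 2) (1/2) with h | h
    · nlinarith
    · nlinarith
  have hnum : a ^ 2 * (1 - z ^ 2) + b ^ 2 * (1 + z ^ 2) = w + b ^ 2 := by
    rw [hwdef]; ring
  rw [hnum]
  have hE1 :
      -a ^ 2 * (a ^ 2 + b ^ 2) / (d ^ 2 * (a ^ 2) ^ ((3:ℝ)/2)) =
        -(a ^ 2 + b ^ 2) / (a * d ^ 2) := fend1 a b d ha hd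
  have hE2 :
      -a ^ 2 * (b ^ 2 + b ^ 2) / (d ^ 2 * (b ^ 2) ^ ((3:ℝ)/2)) =
        -(2 * a ^ 2) / (b * d ^ 2) := fend2 a b d hb hd
  rcases le_total a b with hab | hab
  · -- a ≤ b : a² ≤ w ≤ b²
    have hh : a ^ 2 ≤ b ^ 2 := by nlinarith
    have hwa : a ^ 2 ≤ w := by nlinarith [mul_nonneg (by linarith : (0:ℝ) ≤ b ^ 2 - a ^ 2) hz2']
    have hwb : w ≤ b ^ 2 := by nlinarith [mul_nonneg (by linarith : (0:ℝ) ≤ b ^ 2 - a ^ 2) (by linarith : (0:ℝ) ≤ 1 - z ^ 2)]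
    constructor
    · refine le_trans (min_le_left _ _) ?_
      rw [← hE1]
      exact fmono a b d ha hd (by positivity) hwa
    · refine le_trans ?_ (le_max_right _ _)
      rw [← hE2]
      exact fmono a b d ha hd hw hwb
  · -- b ≤ a : b² ≤ w ≤ a²
    have hh : b ^ 2 ≤ a ^ 2 := by nlinarith
    have hwb : b ^ 2 ≤ w := by nlinarith [mul_nonneg (by linarith : (0:ℝ) ≤ a ^ 2 - b ^ 2) (by linarith : (0:ℝ) ≤ 1 - z ^ 2)]
    have hwa : w ≤ a ^ 2 := by nlinarith [mul_nonneg (by linarith : (0:ℝ) ≤ a ^ 2 - b ^ 2) hz2']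
    constructor
    · refine le_trans (min_le_right _ _) ?_
      rw [← hE2]
      exact fmono a b d ha hd (by positivity) hwb
    · refine le_trans ?_ (le_max_left _ _)
      rw [← hE1]
      exact fmono a b d ha hd hw hwa
end

section
/- Let a, b, d > 0 with a > b, and let 0 < δ with bδ < d and a ≥ √(d²/δ² - b²). Let ξ : [0,1] → [0,1] be the piecewise affine function supported in [α, α+4δ] ⊂ [0,1] that equals 1 on [α+δ, α+3δ], is affine on [α, α+δ] and [α+3δ, α+4δ], and vanishes outside [α, α+4δ]. Then the quadratic form Q_a(ξ) = ∫₀¹ p_a(z) ξ'(z)² + q_a(z) ξ(z)² dz is strictly negative, where p_a(z) = (1-z²)/√(a²(1-z²)+b²z²) and q_a(z) = -a²(a²(1-z²)+b²(1+z²))/(d²(a²(1-z²)+b²z²)^{3/2}). -/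
open Set MeasureTheory intervalIntegral

private noncomputable def sfun (a b z : ℝ) : ℝ := a ^ 2 * (1 - z ^ 2) + b ^ 2 * z ^ 2
private noncomputable def pfun (a b z : ℝ) : ℝ := (1 - z ^ 2) / Real.sqrt (sfun a b z)
private noncomputable def qfun (a b d z : ℝ) : ℝ :=
  -a ^ 2 * (a ^ 2 * (1 - z ^ 2) + b ^ 2 * (1 + z ^ 2)) / (d ^ 2 * (sfun a b z) ^ ((3:ℝ)/2))
private noncomputable def Dfun (α δ z : ℝ) : ℝ :=
  if z ≤ α then 0 else if z ≤ α + δ then 1/δ else if z ≤ α + 3*δ then 0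
  else if z ≤ α + 4*δ then -(1/δ) else 0

set_option maxHeartbeats 2000000 in
/-- The trapezoidal test function `ξ_{α,δ,2δ}` makes the quadratic form
`Q_a(ξ) = ∫₀¹ p_a ξ'² + q_a ξ²` strictly negative, provided `a > b`,
`bδ < d` and `a ≥ √(d²/δ² - b²)`. -/
theorem stmt_12 (a b d δ α : ℝ) (hb : 0 < b) (hba : b < a) (hd : 0 < d)
    (hδ : 0 < δ) (hbδ : b * δ < d) (haδ : Real.sqrt (d ^ 2 / δ ^ 2 - b ^ 2) ≤ a)
    (hα : 0 ≤ α) (hα4 : α + 4 * δ ≤ 1)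
    (ξ : ℝ → ℝ)
    (hξ : ∀ z : ℝ, ξ z =
      if z ≤ α then 0
      else if z ≤ α + δ then (z - α) / δ
      else if z ≤ α + 3 * δ then 1
      else if z ≤ α + 4 * δ then (α + 4 * δ - z) / δ
      else 0) :
    (∫ z in (0:ℝ)..1,
        ((1 - z ^ 2) / Real.sqrt (a ^ 2 * (1 - z ^ 2) + b ^ 2 * z ^ 2)) * (deriv ξ z) ^ 2 +
          (-a ^ 2 * (a ^ 2 * (1 - z ^ 2) + b ^ 2 * (1 + z ^ 2)) /
            (d ^ 2 * (a ^ 2 * (1 - z ^ 2) + b ^ 2 * z ^ 2) ^ ((3:ℝ)/2))) * (ξ z) ^ 2) < 0 := by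
  have ha : 0 < a := hb.trans hba
  have ha0 : (a:ℝ) ≠ 0 := ha.ne'
  have hδ0 : (δ:ℝ) ≠ 0 := hδ.ne'
  have hd0 : (d:ℝ) ≠ 0 := hd.ne'
  have hb2a2 : b ^ 2 ≤ a ^ 2 := by nlinarith
  set C : ℝ := (a^2 + b^2)/(a*d^2) with hC_def
  -- s positivity and bounds
  have hs_pos : ∀ z ∈ Icc (0:ℝ) 1, 0 < sfun a b z := by
    intro z hz
    have h1 : z^2 ≤ 1 := by nlinarith [hz.1, hz.2]
    have h2 : (0:ℝ) ≤ (a^2 - b^2) * (1 - z^2) := by nlinarith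
    simp only [sfun]; nlinarith
  have hs_le : ∀ z ∈ Icc (0:ℝ) 1, sfun a b z ≤ a^2 := by
    intro z hz
    simp only [sfun]; nlinarith [hz.1, hz.2, sq_nonneg z]
  -- continuity of p, q on [0,1]
  have hscont : Continuous (fun z => sfun a b z) := by
    simp only [sfun]; fun_prop
  have hpcont : ContinuousOn (fun z => pfun a b z) (Icc (0:ℝ) 1) := by
    apply ContinuousOn.div (by fun_prop) ((Real.continuous_sqrt.comp hscont).continuousOn)
    intro z hz
    exact (Real.sqrt_pos.mpr (hs_pos z hz)).ne'
  have hqcont : ContinuousOn (fun z => qfun a b d z) (Icc (0:ℝ) 1) := by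
    apply ContinuousOn.div (by fun_prop)
    · exact continuousOn_const.mul (hscont.continuousOn.rpow_const
        (fun z hz => Or.inl (hs_pos z hz).ne'))
    · intro z hz
      have := Real.rpow_pos_of_pos (hs_pos z hz) ((3:ℝ)/2)
      positivity
  -- pointwise bounds
  have hple : ∀ z ∈ Icc (0:ℝ) 1, pfun a b z ≤ 1/a := by
    intro z hz
    have hs0 := hs_pos z hz
    have h1 : (0:ℝ) ≤ 1 - z^2 := by nlinarith [hz.1, hz.2]
    have h2 : a*(1-z^2) ≤ Real.sqrt (sfun a b z) := by
      rw [Real.le_sqrt (by positivity) hs0.le]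
      simp only [sfun]
      nlinarith [mul_nonneg (mul_nonneg (sq_nonneg a) h1) (sq_nonneg z)]
    show (1-z^2)/Real.sqrt (sfun a b z) ≤ 1/a
    rw [div_le_div_iff₀ (Real.sqrt_pos.mpr hs0) ha]
    nlinarith [h2]
  have hqle : ∀ z ∈ Icc (0:ℝ) 1, qfun a b d z ≤ -C := by
    intro z hz
    have hs0 := hs_pos z hz
    have hsle := hs_le z hz
    set S := sfun a b z with hS_def
    have hrw : S ^ ((3:ℝ)/2) = S * Real.sqrt S := by
      rw [show (3:ℝ)/2 = 1 + 1/2 by norm_num, Real.rpow_add hs0, Real.rpow_one,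
        ← Real.sqrt_eq_rpow]
    have hsqnn : 0 ≤ Real.sqrt S := Real.sqrt_nonneg S
    have hsqle : Real.sqrt S ≤ a := by
      rw [show a = Real.sqrt (a^2) by rw [Real.sqrt_sq ha.le]]
      exact Real.sqrt_le_sqrt hsle
    have hnum : a^2*(1-z^2) + b^2*(1+z^2) = S + b^2 := by
      simp only [hS_def, sfun]; ring
    show -a ^ 2 * (a ^ 2 * (1 - z ^ 2) + b ^ 2 * (1 + z ^ 2)) / (d ^ 2 * S ^ ((3:ℝ)/2)) ≤ -C
    rw [hnum, hrw, hC_def]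
    have hST : 0 < S * Real.sqrt S := mul_pos hs0 (Real.sqrt_pos.mpr hs0)
    have key : (a^2+b^2)/(a*d^2) ≤ a^2*(S+b^2)/(d^2*(S*Real.sqrt S)) := by
      rw [div_le_div_iff₀ (by positivity) (mul_pos (pow_pos hd 2) hST)]
      have h1 : (a^2+b^2)*(S*Real.sqrt S) ≤ a^2*(S+b^2)*a := by
        nlinarith [mul_le_mul_of_nonneg_left hsqle
            (mul_nonneg (by positivity : (0:ℝ) ≤ a^2+b^2) hs0.le),
          mul_le_mul_of_nonneg_left hsle (by positivity : (0:ℝ) ≤ a*b^2)]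
      nlinarith [pow_pos hd 2, h1]
    rw [neg_mul, neg_div]
    exact neg_le_neg key
  -- the step function replacing deriv ξ
  have hderiv : ∀ z : ℝ, z ≠ α → z ≠ α + δ → z ≠ α + 3*δ → z ≠ α + 4*δ →
      deriv ξ z = Dfun α δ z := by
    intro z h1 h2 h3 h4
    rcases lt_or_gt_of_ne h1 with hlt | hgt
    · have he : ξ =ᶠ[nhds z] fun _ => (0:ℝ) := by
        filter_upwards [Iio_mem_nhds hlt] with w hw
        rw [hξ w, if_pos (le_of_lt hw)]
      rw [he.deriv_eq, deriv_const]
      simp [Dfun, hlt.le]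
    · rcases lt_or_gt_of_ne h2 with hlt2 | hgt2
      · have he : ξ =ᶠ[nhds z] fun w => (w - α)/δ := by
          filter_upwards [Ioo_mem_nhds hgt hlt2] with w hw
          rw [hξ w, if_neg (not_le.mpr hw.1), if_pos hw.2.le]
        have hda : HasDerivAt (fun w : ℝ => (w - α)/δ) (1/δ) z :=
          ((hasDerivAt_id z).sub_const α).div_const δ
        rw [he.deriv_eq, hda.deriv]
        simp only [Dfun]
        rw [if_neg (not_le.mpr hgt), if_pos hlt2.le]
      · rcases lt_or_gt_of_ne h3 with hlt3 | hgt3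
        · have he : ξ =ᶠ[nhds z] fun _ => (1:ℝ) := by
            filter_upwards [Ioo_mem_nhds hgt2 hlt3] with w hw
            have hw1 : ¬ w ≤ α := not_le.mpr (by linarith [hw.1])
            rw [hξ w, if_neg hw1, if_neg (not_le.mpr hw.1), if_pos hw.2.le]
          rw [he.deriv_eq, deriv_const]
          simp only [Dfun]
          rw [if_neg (not_le.mpr (by linarith : α < z)),
            if_neg (not_le.mpr (by linarith : α + δ < z)), if_pos hlt3.le]
        · rcases lt_or_gt_of_ne h4 with hlt4 | hgt4
          · have he : ξ =ᶠ[nhds z] fun w => (α + 4*δ - w)/δ := by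
              filter_upwards [Ioo_mem_nhds hgt3 hlt4] with w hw
              have hw1 : ¬ w ≤ α := not_le.mpr (by linarith [hw.1])
              have hw2 : ¬ w ≤ α + δ := not_le.mpr (by linarith [hw.1])
              rw [hξ w, if_neg hw1, if_neg hw2, if_neg (not_le.mpr hw.1), if_pos hw.2.le]
            have hda : HasDerivAt (fun w : ℝ => (α + 4*δ - w)/δ) (-(1:ℝ)/δ) z := by
              have := ((hasDerivAt_id z).const_sub (α + 4*δ)).div_const δ
              simpa using this
            rw [he.deriv_eq, hda.deriv]
            simp only [Dfun]
            rw [if_neg (not_le.mpr (by linarith : α < z)),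
              if_neg (not_le.mpr (by linarith : α + δ < z)),
              if_neg (not_le.mpr (by linarith : α + 3*δ < z)), if_pos hlt4.le]
            ring
          · have he : ξ =ᶠ[nhds z] fun _ => (0:ℝ) := by
              filter_upwards [Ioi_mem_nhds hgt4] with w hw
              have hw1 : ¬ w ≤ α := not_le.mpr (by linarith [mem_Ioi.mp hw])
              have hw2 : ¬ w ≤ α + δ := not_le.mpr (by linarith [mem_Ioi.mp hw])
              have hw3 : ¬ w ≤ α + 3*δ := not_le.mpr (by linarith [mem_Ioi.mp hw])
              have hw4 : ¬ w ≤ α + 4*δ := not_le.mpr (mem_Ioi.mp hw)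
              rw [hξ w, if_neg hw1, if_neg hw2, if_neg hw3, if_neg hw4]
            rw [he.deriv_eq, deriv_const]
            simp only [Dfun]
            rw [if_neg (not_le.mpr (by linarith : α < z)),
              if_neg (not_le.mpr (by linarith : α + δ < z)),
              if_neg (not_le.mpr (by linarith : α + 3*δ < z)),
              if_neg (not_le.mpr hgt4)]
    
  -- a.e. equality of deriv ξ with Dfun
  have hDae : ∀ᵐ (x : ℝ) ∂(volume : Measure ℝ), deriv ξ x = Dfun α δ x := by
    have hS : ({α, α+δ, α+3*δ, α+4*δ} : Set ℝ).Countable :=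
      (Set.toFinite _).countable
    have hz := hS.measure_zero (volume : Measure ℝ)
    have hc : ({α, α+δ, α+3*δ, α+4*δ} : Set ℝ)ᶜ ∈ ae (volume : Measure ℝ) :=
      compl_mem_ae_iff.mpr hz
    filter_upwards [hc] with x hx
    simp only [Set.mem_compl_iff, Set.mem_insert_iff, Set.mem_singleton_iff, not_or] at hx
    exact hderiv x hx.1 hx.2.1 hx.2.2.1 hx.2.2.2
  -- local abbreviations
  set G : ℝ → ℝ := fun z => pfun a b z * (Dfun α δ z)^2 + qfun a b d z * (ξ z)^2 with hG_def
  set F : ℝ → ℝ := fun z => (1/a) * (Dfun α δ z)^2 - C * (ξ z)^2 with hF_def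
  -- piece machinery
  have piece : ∀ (f g : ℝ → ℝ) (u v : ℝ), u ≤ v → ContinuousOn g (Icc u v) →
      (∀ x ∈ Ioc u v, f x = g x) →
      IntervalIntegrable f volume u v ∧ (∫ x in u..v, f x) = ∫ x in u..v, g x := by
    intro f g u v huv hg heq
    have hgi : IntervalIntegrable g volume u v := hg.intervalIntegrable_of_Icc huv
    have hfi : IntervalIntegrable f volume u v := by
      rw [intervalIntegrable_iff, Set.uIoc_of_le huv]
      have h2 := intervalIntegrable_iff.mp hgi
      rw [Set.uIoc_of_le huv] at h2
      exact h2.congr_fun (fun x hx => (heq x hx).symm) measurableSet_Ioc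
    refine ⟨hfi, intervalIntegral.integral_congr_ae (.of_forall fun x hx => ?_)⟩
    exact heq x (by rwa [Set.uIoc_of_le huv] at hx)
  -- interval endpoints ordering
  have e01 : (0:ℝ) ≤ α := hα
  have e12 : α ≤ α + δ := by linarith
  have e23 : α + δ ≤ α + 3*δ := by linarith
  have e34 : α + 3*δ ≤ α + 4*δ := by linarith
  have e45 : α + 4*δ ≤ 1 := by linarith
  have sub1 : Icc (0:ℝ) α ⊆ Icc (0:ℝ) 1 := Icc_subset_Icc le_rfl (by linarith)
  have sub2 : Icc α (α+δ) ⊆ Icc (0:ℝ) 1 := Icc_subset_Icc hα (by linarith)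
  have sub3 : Icc (α+δ) (α+3*δ) ⊆ Icc (0:ℝ) 1 := Icc_subset_Icc (by linarith) (by linarith)
  have sub4 : Icc (α+3*δ) (α+4*δ) ⊆ Icc (0:ℝ) 1 := Icc_subset_Icc (by linarith) (by linarith)
  have sub5 : Icc (α+4*δ) 1 ⊆ Icc (0:ℝ) 1 := Icc_subset_Icc (by linarith) le_rfl
  -- values of ξ and Dfun on each Ioc
  have hξ1 : ∀ x ∈ Ioc (0:ℝ) α, ξ x = 0 ∧ Dfun α δ x = 0 := by
    intro x hx
    constructor
    · rw [hξ x, if_pos hx.2]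
    · simp only [Dfun]; rw [if_pos hx.2]
  have hξ2 : ∀ x ∈ Ioc α (α+δ), ξ x = (x - α)/δ ∧ Dfun α δ x = 1/δ := by
    intro x hx
    constructor
    · rw [hξ x, if_neg (not_le.mpr hx.1), if_pos hx.2]
    · simp only [Dfun]; rw [if_neg (not_le.mpr hx.1), if_pos hx.2]
  have hξ3 : ∀ x ∈ Ioc (α+δ) (α+3*δ), ξ x = 1 ∧ Dfun α δ x = 0 := by
    intro x hx
    have hx1 : ¬ x ≤ α := not_le.mpr (by linarith [hx.1])
    have hx2 : ¬ x ≤ α + δ := not_le.mpr hx.1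
    constructor
    · rw [hξ x, if_neg hx1, if_neg hx2, if_pos hx.2]
    · simp only [Dfun]; rw [if_neg hx1, if_neg hx2, if_pos hx.2]
  have hξ4 : ∀ x ∈ Ioc (α+3*δ) (α+4*δ), ξ x = (α + 4*δ - x)/δ ∧ Dfun α δ x = -(1/δ) := by
    intro x hx
    have hx1 : ¬ x ≤ α := not_le.mpr (by linarith [hx.1])
    have hx2 : ¬ x ≤ α + δ := not_le.mpr (by linarith [hx.1])
    have hx3 : ¬ x ≤ α + 3*δ := not_le.mpr hx.1
    constructor
    · rw [hξ x, if_neg hx1, if_neg hx2, if_neg hx3, if_pos hx.2]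
    · simp only [Dfun]; rw [if_neg hx1, if_neg hx2, if_neg hx3, if_pos hx.2]
  have hξ5 : ∀ x ∈ Ioc (α+4*δ) 1, ξ x = 0 ∧ Dfun α δ x = 0 := by
    intro x hx
    have hx1 : ¬ x ≤ α := not_le.mpr (by linarith [hx.1])
    have hx2 : ¬ x ≤ α + δ := not_le.mpr (by linarith [hx.1])
    have hx3 : ¬ x ≤ α + 3*δ := not_le.mpr (by linarith [hx.1])
    have hx4 : ¬ x ≤ α + 4*δ := not_le.mpr hx.1
    constructor
    · rw [hξ x, if_neg hx1, if_neg hx2, if_neg hx3, if_neg hx4]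
    · simp only [Dfun]; rw [if_neg hx1, if_neg hx2, if_neg hx3, if_neg hx4]
  -- G pieces (integrability only)
  have hG1 := piece G (fun _ => 0) 0 α e01 continuousOn_const
    (fun x hx => by simp only [hG_def, (hξ1 x hx).1, (hξ1 x hx).2]; ring)
  have hG2 := piece G (fun z => pfun a b z * (1/δ)^2 + qfun a b d z * ((z - α)/δ)^2)
    α (α+δ) e12
    (((hpcont.mono sub2).mul continuousOn_const).add
      ((hqcont.mono sub2).mul (Continuous.continuousOn (by fun_prop))))
    (fun x hx => by simp only [hG_def, (hξ2 x hx).1, (hξ2 x hx).2])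
  have hG3 := piece G (fun z => qfun a b d z) (α+δ) (α+3*δ) e23 (hqcont.mono sub3)
    (fun x hx => by simp only [hG_def, (hξ3 x hx).1, (hξ3 x hx).2]; ring)
  have hG4 := piece G (fun z => pfun a b z * (1/δ)^2 + qfun a b d z * ((α + 4*δ - z)/δ)^2)
    (α+3*δ) (α+4*δ) e34
    (((hpcont.mono sub4).mul continuousOn_const).add
      ((hqcont.mono sub4).mul (Continuous.continuousOn (by fun_prop))))
    (fun x hx => by simp only [hG_def, (hξ4 x hx).1, (hξ4 x hx).2]; ring)
  have hG5 := piece G (fun _ => 0) (α+4*δ) 1 e45 continuousOn_const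
    (fun x hx => by simp only [hG_def, (hξ5 x hx).1, (hξ5 x hx).2]; ring)
  have hGint : IntervalIntegrable G volume 0 1 :=
    (((hG1.1.trans hG2.1).trans hG3.1).trans hG4.1).trans hG5.1
  -- F pieces
  have hF1 := piece F (fun _ => 0) 0 α e01 continuousOn_const
    (fun x hx => by simp only [hF_def, (hξ1 x hx).1, (hξ1 x hx).2]; ring)
  have hF2 := piece F (fun z => (1/a)*(1/δ)^2 - C*((z - α)/δ)^2) α (α+δ) e12
    (Continuous.continuousOn (by fun_prop))
    (fun x hx => by simp only [hF_def, (hξ2 x hx).1, (hξ2 x hx).2])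
  have hF3 := piece F (fun _ => -C) (α+δ) (α+3*δ) e23 continuousOn_const
    (fun x hx => by simp only [hF_def, (hξ3 x hx).1, (hξ3 x hx).2]; ring)
  have hF4 := piece F (fun z => (1/a)*(1/δ)^2 - C*((α + 4*δ - z)/δ)^2) (α+3*δ) (α+4*δ) e34
    (Continuous.continuousOn (by fun_prop))
    (fun x hx => by simp only [hF_def, (hξ4 x hx).1, (hξ4 x hx).2]; ring)
  have hF5 := piece F (fun _ => 0) (α+4*δ) 1 e45 continuousOn_const
    (fun x hx => by simp only [hF_def, (hξ5 x hx).1, (hξ5 x hx).2]; ring)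
  have hFint : IntervalIntegrable F volume 0 1 :=
    (((hF1.1.trans hF2.1).trans hF3.1).trans hF4.1).trans hF5.1
  -- integral values of the F pieces
  have hI1 : (∫ z in α..α+δ, (z - α)^2) = δ^3/3 := by
    have h := intervalIntegral.integral_eq_sub_of_hasDerivAt (a := α) (b := α+δ)
      (f := fun z => (z - α)^3/3) (f' := fun z => (z - α)^2)
      (fun x _ => by
        have h2 : HasDerivAt (fun z : ℝ => (z - α)^3/3) ((3:ℕ) * (x - α)^(3-1) * 1 / 3) x :=
          (((hasDerivAt_id x).sub_const α).pow 3).div_const 3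
        exact h2.congr_deriv (by push_cast; ring))
      (by apply Continuous.intervalIntegrable; fun_prop)
    rw [h]; ring
  have hI2 : (∫ z in α+3*δ..α+4*δ, (α + 4*δ - z)^2) = δ^3/3 := by
    have h := intervalIntegral.integral_eq_sub_of_hasDerivAt (a := α+3*δ) (b := α+4*δ)
      (f := fun z => -((α + 4*δ - z)^3/3)) (f' := fun z => (α + 4*δ - z)^2)
      (fun x _ => by
        have h2 : HasDerivAt (fun z : ℝ => -((α + 4*δ - z)^3/3))
            (-((3:ℕ) * (α + 4*δ - x)^(3-1) * (-1) / 3)) x :=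
          ((((hasDerivAt_id x).const_sub (α + 4*δ)).pow 3).div_const 3).neg
        exact h2.congr_deriv (by push_cast; ring))
      (by apply Continuous.intervalIntegrable; fun_prop)
    rw [h]; ring
  have hIF2 : (∫ z in α..α+δ, ((1/a)*(1/δ)^2 - C*((z - α)/δ)^2)) = 1/(a*δ) - C*δ/3 := by
    rw [intervalIntegral.integral_sub intervalIntegrable_const
      (Continuous.intervalIntegrable (by fun_prop) _ _), intervalIntegral.integral_const]
    have h2 : (∫ z in α..α+δ, C*((z - α)/δ)^2) = C/δ^2 * ∫ z in α..α+δ, (z - α)^2 := by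
      rw [← intervalIntegral.integral_const_mul]
      apply intervalIntegral.integral_congr
      intro z _
      field_simp
    rw [h2, hI1]
    simp only [smul_eq_mul]
    field_simp
    ring
  have hIF4 : (∫ z in α+3*δ..α+4*δ, ((1/a)*(1/δ)^2 - C*((α + 4*δ - z)/δ)^2))
      = 1/(a*δ) - C*δ/3 := by
    rw [intervalIntegral.integral_sub intervalIntegrable_const
      (Continuous.intervalIntegrable (by fun_prop) _ _), intervalIntegral.integral_const]
    have h2 : (∫ z in α+3*δ..α+4*δ, C*((α + 4*δ - z)/δ)^2)
        = C/δ^2 * ∫ z in α+3*δ..α+4*δ, (α + 4*δ - z)^2 := by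
      rw [← intervalIntegral.integral_const_mul]
      apply intervalIntegral.integral_congr
      intro z _
      field_simp
    rw [h2, hI2]
    simp only [smul_eq_mul]
    field_simp
    ring
  have hFval : (∫ z in (0:ℝ)..1, F z) = 2/(a*δ) - 8*C*δ/3 := by
    rw [← intervalIntegral.integral_add_adjacent_intervals
        (((hF1.1.trans hF2.1).trans hF3.1).trans hF4.1) hF5.1,
      ← intervalIntegral.integral_add_adjacent_intervals
        ((hF1.1.trans hF2.1).trans hF3.1) hF4.1,
      ← intervalIntegral.integral_add_adjacent_intervals (hF1.1.trans hF2.1) hF3.1,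
      ← intervalIntegral.integral_add_adjacent_intervals hF1.1 hF2.1,
      hF1.2, hF2.2, hF3.2, hF4.2, hF5.2, hIF2, hIF4]
    rw [intervalIntegral.integral_const, intervalIntegral.integral_const,
      intervalIntegral.integral_const]
    simp only [smul_eq_mul, mul_zero]
    ring
  -- comparison
  have hGF : ∀ z ∈ Icc (0:ℝ) 1, G z ≤ F z := by
    intro z hz
    have h1 : pfun a b z * (Dfun α δ z)^2 ≤ (1/a) * (Dfun α δ z)^2 :=
      mul_le_mul_of_nonneg_right (hple z hz) (sq_nonneg _)
    have h2 : qfun a b d z * (ξ z)^2 ≤ -C * (ξ z)^2 :=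
      mul_le_mul_of_nonneg_right (hqle z hz) (sq_nonneg _)
    simp only [hG_def, hF_def]
    nlinarith [h1, h2]
  -- final arithmetic bound
  have hfinal : 2/(a*δ) - 8*C*δ/3 < 0 := by
    have hb2 : b^2 ≤ d^2/δ^2 := by
      rw [le_div_iff₀ (by positivity)]
      nlinarith [hbδ, mul_pos hb hδ]
    have h0 : 0 ≤ d^2/δ^2 - b^2 := by linarith
    have hab2 : d^2/δ^2 ≤ a^2 + b^2 := by
      have hsq := Real.sq_sqrt h0
      nlinarith [Real.sqrt_nonneg (d^2/δ^2 - b^2), haδ]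
    have hd2 : d^2 ≤ (a^2 + b^2)*δ^2 := by
      rw [div_le_iff₀ (by positivity)] at hab2
      linarith [hab2]
    have hC' : 1/(a*δ^2) ≤ C := by
      rw [hC_def, div_le_div_iff₀ (by positivity) (by positivity)]
      nlinarith [hd2, ha, hδ]
    have h3 : 8*(1/(a*δ^2))*δ/3 ≤ 8*C*δ/3 := by nlinarith [hC', hδ]
    have he : 8*(1/(a*δ^2))*δ/3 = 8/(3*(a*δ)) := by field_simp
    have h4 : 2/(a*δ) < 8/(3*(a*δ)) := by
      rw [div_lt_div_iff₀ (by positivity) (by positivity)]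
      nlinarith [mul_pos ha hδ]
    rw [he] at h3
    linarith
  -- assemble
  have hgoal : (∫ z in (0:ℝ)..1,
      pfun a b z * (deriv ξ z)^2 + qfun a b d z * (ξ z)^2) = ∫ z in (0:ℝ)..1, G z := by
    apply intervalIntegral.integral_congr_ae
    filter_upwards [hDae] with x hx _
    rw [hx]
  calc (∫ z in (0:ℝ)..1,
      ((1 - z ^ 2) / Real.sqrt (a ^ 2 * (1 - z ^ 2) + b ^ 2 * z ^ 2)) * (deriv ξ z) ^ 2 +
        (-a ^ 2 * (a ^ 2 * (1 - z ^ 2) + b ^ 2 * (1 + z ^ 2)) /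
          (d ^ 2 * (a ^ 2 * (1 - z ^ 2) + b ^ 2 * z ^ 2) ^ ((3:ℝ)/2))) * (ξ z) ^ 2)
      = ∫ z in (0:ℝ)..1, G z := hgoal
    _ ≤ ∫ z in (0:ℝ)..1, F z :=
        intervalIntegral.integral_mono_on (by norm_num) hGint hFint hGF
    _ = 2/(a*δ) - 8*C*δ/3 := hFval
    _ < 0 := hfinal
end

section
/- Let y : ℝ → ℝ be continuous and periodic with period Δ > 0, and suppose on each half-open interval [α, α+Δ) the function y has exactly two zeros. If x : [-T,T] → ℝ is continuous with x(0) = 0 and the composite y∘x has at most m zeros on [-T,T] and x is monotone, then |x(t)| ≤ (1 + m/2)Δ for all t ∈ [-T,T]. -/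
lemma zeros_periods (Δ : ℝ) (hΔ : 0 < Δ) (y : ℝ → ℝ)
    (hzeros : ∀ α : ℝ, ({t ∈ Set.Ico α (α + Δ) | y t = 0}).encard = 2) :
    ∀ (N : ℕ) (α : ℝ), ({t ∈ Set.Ico α (α + N * Δ) | y t = 0}).encard = (2 * N : ℕ) := by
  intro N
  induction N with
  | zero => intro α; simp
  | succ n ih =>
    intro α
    have h1 : α ≤ α + n * Δ := by nlinarith [Nat.cast_nonneg (α := ℝ) n]
    have h2 : α + n * Δ ≤ α + (n + 1 : ℕ) * Δ := by push_cast; nlinarith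
    have hsplit : {t ∈ Set.Ico α (α + (n + 1 : ℕ) * Δ) | y t = 0}
        = {t ∈ Set.Ico α (α + n * Δ) | y t = 0}
          ∪ {t ∈ Set.Ico (α + n * Δ) (α + n * Δ + Δ) | y t = 0} := by
      have he : α + n * Δ + Δ = α + (n + 1 : ℕ) * Δ := by push_cast; ring
      ext u
      simp only [Set.mem_setOf_eq, Set.mem_union, Set.mem_Ico, he]
      constructor
      · rintro ⟨⟨h1u, h2u⟩, h3u⟩
        rcases lt_or_ge u (α + n * Δ) with h | h
        · exact Or.inl ⟨⟨h1u, h⟩, h3u⟩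
        · exact Or.inr ⟨⟨h, h2u⟩, h3u⟩
      · rintro (⟨⟨h1u, h2u⟩, h3u⟩ | ⟨⟨h1u, h2u⟩, h3u⟩)
        · exact ⟨⟨h1u, lt_of_lt_of_le h2u h2⟩, h3u⟩
        · exact ⟨⟨le_trans h1 h1u, h2u⟩, h3u⟩
    have hdisj : Disjoint {t ∈ Set.Ico α (α + n * Δ) | y t = 0}
        {t ∈ Set.Ico (α + n * Δ) (α + n * Δ + Δ) | y t = 0} := by
      rw [Set.disjoint_left]
      rintro u ⟨⟨_, h2u⟩, _⟩ ⟨⟨h1u, _⟩, _⟩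
      exact absurd h1u (not_le.mpr h2u)
    rw [hsplit, Set.encard_union_eq hdisj, ih, hzeros]
    push_cast; ring

/-- Bound on the horizontal displacement: if `y` is `Δ`-periodic with exactly two
zeros in each period, `x` is continuous and monotone on `[-T,T]` with `x(0)=0`, and
`y ∘ x` has at most `m` zeros on `[-T,T]`, then `|x(t)| ≤ (1 + m/2)Δ`. -/
theorem stmt_18 (Δ T : ℝ) (hΔ : 0 < Δ) (hT : 0 < T) (m : ℕ) (hm : 1 ≤ m)
    (y : ℝ → ℝ) (hy : Continuous y)
    (hper : ∀ t : ℝ, y (t + Δ) = y t)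
    (hzeros : ∀ α : ℝ, ({t ∈ Set.Ico α (α + Δ) | y t = 0}).encard = 2)
    (x : ℝ → ℝ) (hx : ContinuousOn x (Set.Icc (-T) T)) (hx0 : x 0 = 0)
    (hmono : MonotoneOn x (Set.Icc (-T) T) ∨ AntitoneOn x (Set.Icc (-T) T))
    (hfin : ({t ∈ Set.Icc (-T) T | y (x t) = 0}).encard ≤ (m : ℕ∞)) :
    ∀ t ∈ Set.Icc (-T) T, |x t| ≤ (1 + (m : ℝ) / 2) * Δ := by
  intro t ht
  by_contra hlt
  push_neg at hlt
  set L := x t with hL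
  set N : ℕ := m / 2 + 1 with hN
  have hNm : m + 1 ≤ 2 * N := by omega
  have hNle : (N : ℝ) * Δ ≤ |L| := by
    have hcast : ((m / 2 : ℕ) : ℝ) ≤ (m : ℝ) / 2 := by
      exact_mod_cast Nat.cast_div_le
    have hNr : (N : ℝ) ≤ 1 + (m : ℝ) / 2 := by rw [hN]; push_cast; linarith
    nlinarith
  have h0mem : (0 : ℝ) ∈ Set.Icc (-T) T := by constructor <;> linarith
  have huIccsub : Set.uIcc 0 t ⊆ Set.Icc (-T) T := by
    rw [show Set.Icc (-T) T = Set.uIcc (-T) T from (Set.uIcc_of_le (by linarith)).symm]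
    exact Set.uIcc_subset_uIcc (by rw [Set.uIcc_of_le (by linarith)]; exact h0mem)
      (by rw [Set.uIcc_of_le (by linarith)]; exact ht)
  have hxc : ContinuousOn x (Set.uIcc 0 t) := hx.mono huIccsub
  have hIVT : Set.uIcc 0 L ⊆ x '' Set.uIcc 0 t := by
    have h := intermediate_value_uIcc hxc
    rwa [hx0] at h
  obtain ⟨α, hZsub⟩ : ∃ α : ℝ, Set.Ico α (α + N * Δ) ⊆ Set.uIcc 0 L := by
    rcases le_or_gt 0 L with h | h
    · refine ⟨0, fun u hu => ?_⟩
      rw [Set.uIcc_of_le h]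
      rw [abs_of_nonneg h] at hNle
      exact ⟨hu.1, le_trans hu.2.le (by linarith [hu.2, hNle, (zero_add ((N:ℝ)*Δ)) ])⟩
    · refine ⟨-((N : ℝ) * Δ), fun u hu => ?_⟩
      rw [Set.uIcc_of_ge h.le]
      rw [abs_of_neg h] at hNle
      have h2 : u < -((N:ℝ)*Δ) + (N:ℝ)*Δ := hu.2
      exact ⟨by linarith [hu.1], by linarith⟩
  have hZ := zeros_periods Δ hΔ y hzeros N α
  have hZim : {u ∈ Set.Ico α (α + N * Δ) | y u = 0}
      ⊆ x '' {s ∈ Set.uIcc 0 t | y (x s) = 0} := by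
    intro z hz
    obtain ⟨s, hs, hxs⟩ := hIVT (hZsub hz.1)
    exact ⟨s, ⟨hs, by rw [hxs]; exact hz.2⟩, hxs⟩
  have hchain : ((2 * N : ℕ) : ℕ∞) ≤ (m : ℕ∞) := by
    calc ((2 * N : ℕ) : ℕ∞) = _ := hZ.symm
      _ ≤ (x '' {s ∈ Set.uIcc 0 t | y (x s) = 0}).encard := Set.encard_le_encard hZim
      _ ≤ ({s ∈ Set.uIcc 0 t | y (x s) = 0}).encard := Set.encard_image_le _ _
      _ ≤ ({s ∈ Set.Icc (-T) T | y (x s) = 0}).encard :=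
          Set.encard_le_encard (fun s hs => ⟨huIccsub hs.1, hs.2⟩)
      _ ≤ (m : ℕ∞) := hfin
  have : 2 * N ≤ m := by exact_mod_cast hchain
  omega
end
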